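/- Let Φ be a map from a set X into a complex Hilbert space H. If Φ is injective, then for every t > 0 the kernel (x,y) ↦ exp(t ⟨Φ(y), Φ(x)⟩_H) is strictly positive definite on X × X. -/

import Mathlib

open scoped ComplexOrder ComplexConjugate InnerProductSpace
open Finset

private theorem triple_swap' {α β γ M : Type*} [Fintype α] [Fintype β] [Fintype γ]
    [AddCommMonoid M] (F : α → β → γ → M) :
    ∑ i, ∑ j, ∑ g, F i j g = ∑ g, ∑ i, ∑ j, F i j g :=
  (Finset.sum_congr rfl fun _ _ => Finset.sum_comm).trans Finset.sum_comm

private theorem core_identity' {n m k : ℕ} (x : Fin n → Fin m → ℂ) (c : Fin n → ℂ) :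
    ∑ i, ∑ j, c i * conj (c j) * (∑ b, conj (x j b) * x i b) ^ k
      = ∑ g : Fin k → Fin m, (Complex.normSq (∑ i, c i * ∏ a, x i (g a)) : ℂ) := by
  have key : ∀ (i j : Fin n), (∑ b, conj (x j b) * x i b) ^ k
      = ∑ g : Fin k → Fin m, (∏ a, x i (g a)) * conj (∏ a, x j (g a)) := by
    intro i j
    rw [← Fin.prod_const k (∑ b, conj (x j b) * x i b), Finset.prod_univ_sum]
    simp [Fintype.piFinset_univ, Finset.prod_mul_distrib, map_prod, mul_comm]
  calc ∑ i, ∑ j, c i * conj (c j) * (∑ b, conj (x j b) * x i b) ^ k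
      = ∑ i, ∑ j, ∑ g : Fin k → Fin m,
          c i * conj (c j) * ((∏ a, x i (g a)) * conj (∏ a, x j (g a))) := by
        simp only [key, Finset.mul_sum]
    _ = ∑ g : Fin k → Fin m, ∑ i, ∑ j,
          c i * conj (c j) * ((∏ a, x i (g a)) * conj (∏ a, x j (g a))) := triple_swap' _
    _ = ∑ g : Fin k → Fin m, (Complex.normSq (∑ i, c i * ∏ a, x i (g a)) : ℂ) := by
        refine Finset.sum_congr rfl fun g _ => ?_
        rw [← Complex.mul_conj, Finset.sum_mul, map_sum]
        refine Finset.sum_congr rfl fun i _ => ?_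
        rw [Finset.mul_sum]
        refine Finset.sum_congr rfl fun j _ => ?_
        simp only [map_mul]
        ring

private theorem dot_pow_expand' {n m k : ℕ} (x : Fin n → Fin m → ℂ) (c : Fin n → ℂ)
    (u : Fin m → ℂ) :
    ∑ i, c i * (∑ b, x i b * u b) ^ k
      = ∑ g : Fin k → Fin m, (∏ a, u (g a)) * (∑ i, c i * ∏ a, x i (g a)) := by
  have key : ∀ i : Fin n, (∑ b, x i b * u b) ^ k
      = ∑ g : Fin k → Fin m, (∏ a, x i (g a)) * (∏ a, u (g a)) := by
    intro i
    rw [← Fin.prod_const k (∑ b, x i b * u b), Finset.prod_univ_sum]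
    simp [Fintype.piFinset_univ, Finset.prod_mul_distrib]
  calc ∑ i, c i * (∑ b, x i b * u b) ^ k
      = ∑ i, ∑ g : Fin k → Fin m, c i * ((∏ a, x i (g a)) * (∏ a, u (g a))) := by
        simp only [key, Finset.mul_sum]
    _ = ∑ g : Fin k → Fin m, ∑ i, c i * ((∏ a, x i (g a)) * (∏ a, u (g a))) :=
        Finset.sum_comm
    _ = _ := by
        refine Finset.sum_congr rfl fun g _ => ?_
        rw [Finset.mul_sum]
        exact Finset.sum_congr rfl fun i _ => by ring

private theorem exists_separating' {n m : ℕ} (x : Fin n → Fin m → ℂ)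
    (hx : Function.Injective x) :
    ∃ u : Fin m → ℂ, Function.Injective (fun i => ∑ b, x i b * u b) := by
  classical
  set L : Fin n → Fin n → MvPolynomial (Fin m) ℂ :=
    fun i j => ∑ b, MvPolynomial.C (x i b - x j b) * MvPolynomial.X b with hL
  have heval : ∀ i j (u : Fin m → ℂ),
      MvPolynomial.eval u (L i j) = ∑ b, (x i b - x j b) * u b := by
    intro i j u; simp [hL]
  have hLne : ∀ i j, i ≠ j → L i j ≠ 0 := by
    intro i j hij h0
    have hd : x i ≠ x j := fun h => hij (hx h)
    have h1 : MvPolynomial.eval (fun b => conj (x i b - x j b)) (L i j) = 0 := by rw [h0]; simp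
    rw [heval] at h1
    simp only [Complex.mul_conj] at h1
    have h2 : ∑ b, Complex.normSq (x i b - x j b) = 0 := by exact_mod_cast h1
    refine hd (funext fun b => sub_eq_zero.mp (Complex.normSq_eq_zero.mp
      ((Finset.sum_eq_zero_iff_of_nonneg
        (fun b _ => Complex.normSq_nonneg (x i b - x j b))).mp h2 b (Finset.mem_univ b))))
  set P : MvPolynomial (Fin m) ℂ := ∏ p ∈ Finset.univ.offDiag, L p.1 p.2 with hP
  have hPne : P ≠ 0 := Finset.prod_ne_zero_iff.mpr fun p hp =>
    hLne p.1 p.2 (Finset.mem_offDiag.mp hp).2.2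
  have : ∃ u : Fin m → ℂ, MvPolynomial.eval u P ≠ 0 := by
    by_contra h
    push_neg at h
    exact hPne (MvPolynomial.funext fun u => by rw [h u, map_zero])
  obtain ⟨u, hu⟩ := this
  refine ⟨u, fun i j hij => ?_⟩
  by_contra hne
  have hmem : (i, j) ∈ Finset.univ.offDiag := Finset.mem_offDiag.mpr ⟨mem_univ _, mem_univ _, hne⟩
  have : MvPolynomial.eval u (L i j) = 0 := by
    rw [heval]
    simp only [sub_mul, Finset.sum_sub_distrib]
    simpa using sub_eq_zero.mpr hij
  exact hu (by rw [hP, map_prod]; exact Finset.prod_eq_zero hmem this)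

private theorem exists_pos' {n m : ℕ} (x : Fin n → Fin m → ℂ) (hx : Function.Injective x)
    (c : Fin n → ℂ) (hc : c ≠ 0) :
    ∃ (k : ℕ) (g : Fin k → Fin m), (∑ i, c i * ∏ a, x i (g a)) ≠ 0 := by
  by_contra h
  push_neg at h
  obtain ⟨u, hu⟩ := exists_separating' x hx
  apply hc
  refine Matrix.eq_zero_of_forall_pow_sum_mul_pow_eq_zero hu (fun k => ?_)
  show ∑ i, c i * (∑ b, x i b * u b) ^ (k : ℕ) = 0
  rw [dot_pow_expand' x c u]
  simp [h]

/-- `k` is strictly positive definite on `X`. -/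
def IsStrictPosKernel {X : Type*} (k : X → X → ℂ) : Prop :=
  ∀ (n : ℕ) (x : Fin n → X), Function.Injective x →
    ∀ c : Fin n → ℂ, c ≠ 0 →
      0 < ∑ i, ∑ j, c i * conj (c j) * k (x i) (x j)

/-- If `Φ : X → H` is an injective map into a complex Hilbert space, then for every `t > 0`
the kernel `(x,y) ↦ exp (t ⟪Φ y, Φ x⟫)` is strictly positive definite. -/
theorem exp_inner_isStrictPosKernel {X : Type*}
    {H : Type*} [NormedAddCommGroup H] [InnerProductSpace ℂ H] [CompleteSpace H]
    (Φ : X → H) (hΦ : Function.Injective Φ) (t : ℝ) (ht : 0 < t) :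
    IsStrictPosKernel (fun x y => Complex.exp ((t : ℂ) * ⟪Φ y, Φ x⟫_ℂ)) := by
  intro n xx hx c hc
  classical
  set v : Fin n → H := fun i => Φ (xx i) with hv
  have hvinj : Function.Injective v := fun i j h => hx (hΦ h)
  haveI : FiniteDimensional ℂ (Submodule.span ℂ (Set.range v)) :=
    FiniteDimensional.span_of_finite ℂ (Set.finite_range v)
  set U : Submodule ℂ H := Submodule.span ℂ (Set.range v) with hU
  set m : ℕ := Module.finrank ℂ U with hm
  let ob : OrthonormalBasis (Fin m) ℂ U := stdOrthonormalBasis ℂ U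
  let w : Fin n → U := fun i => ⟨v i, Submodule.subset_span ⟨i, rfl⟩⟩
  let xc : Fin n → Fin m → ℂ := fun i b => ob.repr (w i) b
  have hxcinj : Function.Injective xc := by
    intro i j h
    apply hvinj
    have hw : w i = w j := ob.repr.injective (by ext b; exact congrFun h b)
    exact congrArg Subtype.val hw
  have hinner : ∀ i j, ⟪v j, v i⟫_ℂ = ∑ b, conj (xc j b) * xc i b := by
    intro i j
    have h1 : ⟪v j, v i⟫_ℂ = ⟪w j, w i⟫_ℂ := (Submodule.coe_inner U (w j) (w i)).symm
    rw [h1, ← ob.repr.inner_map_map (w j) (w i), PiLp.inner_apply]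
    simp [RCLike.inner_apply, xc]
    exact Finset.sum_congr rfl fun _ _ => mul_comm _ _
  -- the coefficient sums
  set S : (k : ℕ) → (Fin k → Fin m) → ℂ := fun k g => ∑ i, c i * ∏ a, xc i (g a) with hS
  set B : ℕ → ℝ := fun k => ∑ g : Fin k → Fin m, Complex.normSq (S k g) with hB
  -- exp expansion
  have hexp : ∀ z : ℂ, Complex.exp z = ∑' k : ℕ, z ^ k / (k.factorial : ℂ) := by
    intro z
    rw [Complex.exp_eq_exp_ℂ, NormedSpace.exp_eq_tsum_div]
  set f : Fin n → Fin n → ℕ → ℂ := fun i j k =>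
    c i * conj (c j) * (((t : ℂ) * ⟪v j, v i⟫_ℂ) ^ k / (k.factorial : ℂ)) with hf
  have hfs : ∀ i j, Summable (f i j) := fun i j =>
    (NormedSpace.expSeries_div_summable ((t : ℂ) * ⟪v j, v i⟫_ℂ)).mul_left _
  have h3 : ∀ k : ℕ, ∑ i, ∑ j, f i j k = ((t ^ k / (k.factorial : ℝ) * B k : ℝ) : ℂ) := by
    intro k
    have step : ∑ i, ∑ j, f i j k
        = ((t : ℂ) ^ k / (k.factorial : ℂ)) *
          ∑ i, ∑ j, c i * conj (c j) * (∑ b, conj (xc j b) * xc i b) ^ k := by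
      rw [Finset.mul_sum]
      refine Finset.sum_congr rfl fun i _ => ?_
      rw [Finset.mul_sum]
      refine Finset.sum_congr rfl fun j _ => ?_
      rw [hf]
      simp only [← hinner i j]
      rw [mul_pow]
      ring
    rw [step, core_identity' xc c, hB]
    push_cast
    ring
  have hsumB : Summable (fun k => t ^ k / (k.factorial : ℝ) * B k) := by
    have hsC : Summable (fun k => ∑ i, ∑ j, f i j k) :=
      summable_sum fun i _ => summable_sum fun j _ => hfs i j
    rw [funext h3] at hsC
    exact Complex.summable_ofReal.mp hsC
  have hQ : ∑ i, ∑ j, c i * conj (c j) * Complex.exp ((t : ℂ) * ⟪v j, v i⟫_ℂ)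
      = ((∑' k : ℕ, t ^ k / (k.factorial : ℝ) * B k : ℝ) : ℂ) := by
    calc ∑ i, ∑ j, c i * conj (c j) * Complex.exp ((t : ℂ) * ⟪v j, v i⟫_ℂ)
        = ∑ i, ∑ j, ∑' k, f i j k := by
          refine Finset.sum_congr rfl fun i _ => Finset.sum_congr rfl fun j _ => ?_
          rw [hexp, ← tsum_mul_left]
      _ = ∑ i, ∑' k, ∑ j, f i j k :=
          Finset.sum_congr rfl fun i _ => (Summable.tsum_finsetSum fun j _ => hfs i j).symm
      _ = ∑' k, ∑ i, ∑ j, f i j k :=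
          (Summable.tsum_finsetSum fun i _ => summable_sum fun j _ => hfs i j).symm
      _ = ∑' k, ((t ^ k / (k.factorial : ℝ) * B k : ℝ) : ℂ) := tsum_congr h3
      _ = _ := (Complex.ofReal_tsum _).symm
  obtain ⟨k0, g0, hg0⟩ := exists_pos' xc hxcinj c hc
  have hBpos : 0 < t ^ k0 / (k0.factorial : ℝ) * B k0 := by
    refine mul_pos (div_pos (pow_pos ht _) (Nat.cast_pos.mpr k0.factorial_pos)) ?_
    have h1 : 0 < Complex.normSq (S k0 g0) := Complex.normSq_pos.mpr hg0
    exact lt_of_lt_of_le h1 (Finset.single_le_sum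
      (fun g _ => Complex.normSq_nonneg (S k0 g)) (Finset.mem_univ g0))
  have hpos : 0 < ∑' k : ℕ, t ^ k / (k.factorial : ℝ) * B k := by
    refine Summable.tsum_pos hsumB (fun k => ?_) k0 hBpos
    refine mul_nonneg (by positivity) ?_
    exact Finset.sum_nonneg fun g _ => Complex.normSq_nonneg _
  show (0 : ℂ) < ∑ i, ∑ j, c i * conj (c j) * Complex.exp ((t : ℂ) * ⟪v j, v i⟫_ℂ)
  rw [hQ]
  exact Complex.zero_lt_real.mpr hpos
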